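/- arXiv:1408.2869 — 2 statements merged into one kernel-verified Lean document; each statement's English description precedes it below -/
import Mathlib

section
/- Let m₁, m₂ ∈ ℝ^d and let S₁, S₂ be positive definite self-adjoint real d×d matrices. Define m = (S₁+S₂)⁻¹(S₁m₁ + S₂m₂), S = S₁+S₂, and W = (S₁⁻¹+S₂⁻¹)⁻¹. Then −mᵀSm + m₁ᵀS₁m₁ + m₂ᵀS₂m₂ = (m₁−m₂)ᵀW(m₁−m₂). -/
open Matrix

private lemma key_dot (d : ℕ) (M : Matrix (Fin d) (Fin d) ℝ) (x z : Fin d → ℝ) :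
    (M *ᵥ x) ⬝ᵥ z = x ⬝ᵥ (Mᵀ *ᵥ z) := by
  rw [dotProduct_comm, dotProduct_mulVec, ← mulVec_transpose, dotProduct_comm]

/-- With `m = (S₁+S₂)⁻¹(S₁m₁+S₂m₂)`, `S = S₁+S₂`, `W = (S₁⁻¹+S₂⁻¹)⁻¹`
for positive definite self-adjoint `S₁, S₂`:
`−mᵀSm + m₁ᵀS₁m₁ + m₂ᵀS₂m₂ = (m₁−m₂)ᵀW(m₁−m₂)`. -/
theorem stmt_2 (d : ℕ) (m₁ m₂ : Fin d → ℝ)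
    (S₁ S₂ : Matrix (Fin d) (Fin d) ℝ) (h₁ : S₁.PosDef) (h₂ : S₂.PosDef)
    (m : Fin d → ℝ) (hm : m = (S₁ + S₂)⁻¹ *ᵥ (S₁ *ᵥ m₁ + S₂ *ᵥ m₂))
    (S : Matrix (Fin d) (Fin d) ℝ) (hS : S = S₁ + S₂)
    (W : Matrix (Fin d) (Fin d) ℝ) (hW : W = (S₁⁻¹ + S₂⁻¹)⁻¹) :
    -(m ⬝ᵥ (S *ᵥ m)) + m₁ ⬝ᵥ (S₁ *ᵥ m₁) + m₂ ⬝ᵥ (S₂ *ᵥ m₂) =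
      (m₁ - m₂) ⬝ᵥ (W *ᵥ (m₁ - m₂)) := by
  have hAdd : (S₁ + S₂).PosDef :=
    h₁.add h₂
  set A := S₁ + S₂ with hAdef
  have dA : IsUnit A.det := hAdd.det_pos.ne'.isUnit
  have d1 : IsUnit S₁.det := h₁.det_pos.ne'.isUnit
  have d2 : IsUnit S₂.det := h₂.det_pos.ne'.isUnit
  have hT1 : S₁ᵀ = S₁ := by
    have := h₁.1; rwa [Matrix.IsHermitian, conjTranspose_eq_transpose_of_trivial] at this
  have hT2 : S₂ᵀ = S₂ := by
    have := h₂.1; rwa [Matrix.IsHermitian, conjTranspose_eq_transpose_of_trivial] at this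
  -- matrix identities
  have hsum : S₁⁻¹ + S₂⁻¹ = S₁⁻¹ * A * S₂⁻¹ := by
    rw [hAdef, mul_add, Matrix.nonsing_inv_mul _ d1, add_mul, one_mul, Matrix.mul_assoc,
      Matrix.mul_nonsing_inv _ d2, Matrix.mul_one, add_comm]
  have hW1 : W = S₂ * A⁻¹ * S₁ := by
    rw [hW, hsum, Matrix.mul_inv_rev, Matrix.mul_inv_rev,
      Matrix.nonsing_inv_nonsing_inv _ d1, Matrix.nonsing_inv_nonsing_inv _ d2]
    exact (Matrix.mul_assoc _ _ _).symm
  have hW2 : W = S₁ * A⁻¹ * S₂ := by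
    have hsum' : S₁⁻¹ + S₂⁻¹ = S₂⁻¹ * A * S₁⁻¹ := by
      rw [hAdef, mul_add, Matrix.nonsing_inv_mul _ d2, add_mul, one_mul, Matrix.mul_assoc,
        Matrix.mul_nonsing_inv _ d1, Matrix.mul_one]
      exact add_comm _ _
    rw [hW, hsum', Matrix.mul_inv_rev, Matrix.mul_inv_rev,
      Matrix.nonsing_inv_nonsing_inv _ d1, Matrix.nonsing_inv_nonsing_inv _ d2]
    exact (Matrix.mul_assoc _ _ _).symm
  have h11 : S₁ * A⁻¹ * S₁ = S₁ - W := by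
    have hA1 : A - S₂ = S₁ := by rw [hAdef]; abel
    calc S₁ * A⁻¹ * S₁ = S₁ * A⁻¹ * (A - S₂) := by rw [hA1]
      _ = S₁ * (A⁻¹ * A) - S₁ * A⁻¹ * S₂ := by rw [mul_sub, Matrix.mul_assoc]
      _ = S₁ - W := by rw [Matrix.nonsing_inv_mul _ dA, Matrix.mul_one, hW2]
  have h22 : S₂ * A⁻¹ * S₂ = S₂ - W := by
    have hA2 : A - S₁ = S₂ := by rw [hAdef]; abel
    calc S₂ * A⁻¹ * S₂ = S₂ * A⁻¹ * (A - S₁) := by rw [hA2]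
      _ = S₂ * (A⁻¹ * A) - S₂ * A⁻¹ * S₁ := by rw [mul_sub, Matrix.mul_assoc]
      _ = S₂ - W := by rw [Matrix.nonsing_inv_mul _ dA, Matrix.mul_one, hW1]
  -- vector side
  set u := S₁ *ᵥ m₁ + S₂ *ᵥ m₂ with hu
  have hSm : S *ᵥ m = u := by
    rw [hS, hm, mulVec_mulVec, Matrix.mul_nonsing_inv _ dA, one_mulVec]
  have hmu : m ⬝ᵥ (S *ᵥ m) = u ⬝ᵥ (A⁻¹ *ᵥ u) := by
    rw [hSm, hm, dotProduct_comm]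
  have expand : ∀ (Si Sj : Matrix (Fin d) (Fin d) ℝ) (x y : Fin d → ℝ), Siᵀ = Si →
      (Si *ᵥ x) ⬝ᵥ (A⁻¹ *ᵥ (Sj *ᵥ y)) = x ⬝ᵥ ((Si * A⁻¹ * Sj) *ᵥ y) := by
    intro Si Sj x y hSi
    rw [key_dot, hSi, mulVec_mulVec, mulVec_mulVec, Matrix.mul_assoc Si A⁻¹ Sj]
  have hquad : u ⬝ᵥ (A⁻¹ *ᵥ u) =
      m₁ ⬝ᵥ ((S₁ - W) *ᵥ m₁) + m₁ ⬝ᵥ (W *ᵥ m₂) + m₂ ⬝ᵥ (W *ᵥ m₁)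
        + m₂ ⬝ᵥ ((S₂ - W) *ᵥ m₂) := by
    rw [hu, mulVec_add, add_dotProduct, dotProduct_add, dotProduct_add,
      expand S₁ S₁ m₁ m₁ hT1, expand S₁ S₂ m₁ m₂ hT1, expand S₂ S₁ m₂ m₁ hT2,
      expand S₂ S₂ m₂ m₂ hT2, h11, h22, ← hW2, ← hW1]
    ring
  rw [hmu, hquad, sub_dotProduct, mulVec_sub, dotProduct_sub, dotProduct_sub,
    sub_mulVec, dotProduct_sub, sub_mulVec, dotProduct_sub]
  ring
end

section
/- Let γ > 0 and let x ↦ Σ_x be any function assigning to each x ∈ ℝ^d a positive definite self-adjoint real d×d matrix. Define K̂_γ(x,y) = ((π/γ)^d · det(Σ_x + Σ_y))^{−1/2} · exp(−γ‖x−y‖²_{Σ_x+Σ_y}). Then K̂_γ is a positive semidefinite (Mercer) kernel: for every n ∈ ℕ, every x₁,…,xₙ ∈ ℝ^d and every c₁,…,cₙ ∈ ℝ, ∑_{i=1}^n ∑_{j=1}^n c_i c_j K̂_γ(x_i, x_j) ≥ 0; moreover K̂_γ is symmetric, K̂_γ(x,y) = K̂_γ(y,x). -/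
open Matrix Real

/-- Squared Mahalanobis norm `‖v‖²_Σ = vᵀ Σ⁻¹ v`. -/
noncomputable def mahSq {d : ℕ} (A : Matrix (Fin d) (Fin d) ℝ) (v : Fin d → ℝ) : ℝ :=
  v ⬝ᵥ (A⁻¹ *ᵥ v)

/-- The kernel `K̂_γ(x,y) = ((π/γ)^d det(Σ_x+Σ_y))^{−1/2} exp(−γ‖x−y‖²_{Σ_x+Σ_y})`. -/
noncomputable def hatK {d : ℕ} (γ : ℝ)
    (S : (Fin d → ℝ) → Matrix (Fin d) (Fin d) ℝ) (x y : Fin d → ℝ) : ℝ :=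
  ((π / γ) ^ d * (S x + S y).det) ^ (-(1 / 2) : ℝ) *
    Real.exp (-γ * mahSq (S x + S y) (x - y))

/-! ### Auxiliary lemmas -/

namespace StmtNineAux

open MeasureTheory

variable {d : ℕ}

lemma real_isHermitian_transpose {M : Matrix (Fin d) (Fin d) ℝ} (h : M.IsHermitian) :
    Mᵀ = M := by
  rw [← Matrix.conjTranspose_eq_transpose_of_trivial]; exact h

lemma posDef_smul_aux {M : Matrix (Fin d) (Fin d) ℝ} (hM : M.PosDef) {c : ℝ} (hc : 0 < c) :
    (c • M).PosDef := by
  refine ⟨?_, fun v hv => ?_⟩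
  · show (c • M)ᴴ = c • M
    rw [Matrix.conjTranspose_smul, hM.1.eq]
    norm_num
  · exact (hM.smul hc).2 hv

lemma quad_eq_sq {M R : Matrix (Fin d) (Fin d) ℝ} (hRR : R * R = M) (hRt : Rᵀ = R)
    (t : Fin d → ℝ) : t ⬝ᵥ M *ᵥ t = (R *ᵥ t) ⬝ᵥ (R *ᵥ t) := by
  rw [← hRR, ← Matrix.mulVec_mulVec, Matrix.dotProduct_mulVec, ← Matrix.mulVec_transpose, hRt]

lemma exp_neg_dot_eq (u : Fin d → ℝ) : rexp (-(u ⬝ᵥ u)) = ∏ i, rexp (-1 * (u i) ^ 2) := by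
  rw [← Real.exp_sum]
  congr 1
  simp only [dotProduct, ← Finset.sum_neg_distrib]
  congr 1 with i
  ring

lemma integral_exp_neg_dotProduct_self :
    ∫ u : Fin d → ℝ, rexp (-(u ⬝ᵥ u)) = Real.sqrt π ^ d := by
  simp_rw [exp_neg_dot_eq]
  rw [MeasureTheory.integral_fintype_prod_volume_eq_prod
    (f := fun (_ : Fin d) (x : ℝ) => rexp (-1 * x ^ 2))]
  rw [integral_gaussian]
  simp

lemma integrable_exp_neg_dotProduct_self :
    Integrable (fun u : Fin d → ℝ => rexp (-(u ⬝ᵥ u))) (volume : Measure (Fin d → ℝ)) := by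
  simp_rw [exp_neg_dot_eq]
  exact Integrable.fintype_prod (f := fun (_ : Fin d) (x : ℝ) => rexp (-1 * x ^ 2))
    fun i => integrable_exp_neg_mul_sq (by norm_num : (0:ℝ) < 1)

lemma integral_comp_mulVec {R : Matrix (Fin d) (Fin d) ℝ} (hR : R.det ≠ 0)
    {g : (Fin d → ℝ) → ℝ} (hg : AEStronglyMeasurable g (volume : Measure (Fin d → ℝ))) :
    ∫ x : Fin d → ℝ, g (R *ᵥ x) = |R.det|⁻¹ * ∫ x : Fin d → ℝ, g x := by
  have hmap := Real.map_matrix_volume_pi_eq_smul_volume_pi hR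
  have hcont : Continuous (Matrix.toLin' R) := LinearMap.continuous_of_finiteDimensional _
  have h1 : ∫ x : Fin d → ℝ, g (R *ᵥ x) = ∫ y, g y ∂(Measure.map (Matrix.toLin' R) volume) := by
    rw [integral_map hcont.measurable.aemeasurable]
    · simp [Matrix.toLin'_apply]
    · rw [hmap]
      exact hg.smul_measure _
  rw [h1, hmap, integral_smul_measure]
  rw [ENNReal.toReal_ofReal (abs_nonneg _), abs_inv]
  simp [smul_eq_mul]

lemma integrable_comp_mulVec {R : Matrix (Fin d) (Fin d) ℝ} (hR : R.det ≠ 0)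
    {g : (Fin d → ℝ) → ℝ} (hg : Integrable g (volume : Measure (Fin d → ℝ))) :
    Integrable (fun x => g (R *ᵥ x)) (volume : Measure (Fin d → ℝ)) := by
  have hmap := Real.map_matrix_volume_pi_eq_smul_volume_pi hR
  have hcont : Continuous (Matrix.toLin' R) := LinearMap.continuous_of_finiteDimensional _
  have h2 : Integrable g (Measure.map (Matrix.toLin' R) volume) := by
    rw [hmap]
    apply hg.smul_measure
    simp
  have := (integrable_map_measure (by rw [hmap]; exact hg.aestronglyMeasurable.smul_measure _)
      hcont.measurable.aemeasurable).mp h2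
  simpa [Function.comp_def, Matrix.toLin'_apply] using this

open scoped MatrixOrder in
lemma sqrt_facts {M : Matrix (Fin d) (Fin d) ℝ} (hM : M.PosDef) :
    ∃ R : Matrix (Fin d) (Fin d) ℝ, R * R = M ∧ Rᵀ = R ∧ R.det ≠ 0 ∧
      |R.det| = Real.sqrt M.det := by
  refine ⟨CFC.sqrt M, CFC.sqrt_mul_sqrt_self M hM.posSemidef.nonneg, ?_, ?_, ?_⟩
  · exact real_isHermitian_transpose (CFC.sqrt_nonneg M).posSemidef.1
  · intro h
    have := hM.det_pos
    rw [← CFC.sqrt_mul_sqrt_self M hM.posSemidef.nonneg, Matrix.det_mul, h, mul_zero] at this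
    exact lt_irrefl _ this
  · rw [← Real.sqrt_sq_eq_abs, sq, ← Matrix.det_mul, CFC.sqrt_mul_sqrt_self M hM.posSemidef.nonneg]

lemma integral_exp_neg_quad {M : Matrix (Fin d) (Fin d) ℝ} (hM : M.PosDef) :
    ∫ t : Fin d → ℝ, rexp (-(t ⬝ᵥ M *ᵥ t)) = Real.sqrt π ^ d / Real.sqrt M.det := by
  obtain ⟨R, hRR, hRt, hR0, hRd⟩ := sqrt_facts hM
  have hmeas : AEStronglyMeasurable (fun u : Fin d → ℝ => rexp (-(u ⬝ᵥ u)))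
      (volume : Measure (Fin d → ℝ)) :=
    integrable_exp_neg_dotProduct_self.aestronglyMeasurable
  calc ∫ t : Fin d → ℝ, rexp (-(t ⬝ᵥ M *ᵥ t))
      = ∫ t : Fin d → ℝ, rexp (-((R *ᵥ t) ⬝ᵥ (R *ᵥ t))) := by
        simp_rw [quad_eq_sq hRR hRt]
    _ = |R.det|⁻¹ * ∫ u : Fin d → ℝ, rexp (-(u ⬝ᵥ u)) := integral_comp_mulVec hR0 hmeas
    _ = Real.sqrt π ^ d / Real.sqrt M.det := by
        rw [integral_exp_neg_dotProduct_self, hRd, div_eq_inv_mul]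

lemma integrable_exp_neg_quad {M : Matrix (Fin d) (Fin d) ℝ} (hM : M.PosDef) :
    Integrable (fun t : Fin d → ℝ => rexp (-(t ⬝ᵥ M *ᵥ t))) (volume : Measure (Fin d → ℝ)) := by
  obtain ⟨R, hRR, hRt, hR0, hRd⟩ := sqrt_facts hM
  have := integrable_comp_mulVec hR0 (g := fun u : Fin d → ℝ => rexp (-(u ⬝ᵥ u)))
    integrable_exp_neg_dotProduct_self
  simpa [quad_eq_sq hRR hRt] using this

lemma mulVec_dot (P : Matrix (Fin d) (Fin d) ℝ) (v z : Fin d → ℝ) :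
    (P *ᵥ v) ⬝ᵥ z = v ⬝ᵥ (Pᵀ *ᵥ z) := by
  rw [dotProduct_comm, Matrix.dotProduct_mulVec, dotProduct_comm,
    ← Matrix.mulVec_transpose]

lemma bilin_comm {M : Matrix (Fin d) (Fin d) ℝ} (hMt : Mᵀ = M) (v w : Fin d → ℝ) :
    v ⬝ᵥ M *ᵥ w = w ⬝ᵥ M *ᵥ v := by
  rw [Matrix.dotProduct_mulVec, ← Matrix.mulVec_transpose, hMt, dotProduct_comm]

lemma complete_square {A B : Matrix (Fin d) (Fin d) ℝ} (hAt : Aᵀ = A) (hBt : Bᵀ = B)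
    (hCu : IsUnit (A + B).det) (x y t : Fin d → ℝ) :
    (t - x) ⬝ᵥ A *ᵥ (t - x) + (t - y) ⬝ᵥ B *ᵥ (t - y)
      = (t - (A + B)⁻¹ *ᵥ (A *ᵥ x + B *ᵥ y)) ⬝ᵥ
          (A + B) *ᵥ (t - (A + B)⁻¹ *ᵥ (A *ᵥ x + B *ᵥ y))
        + (x - y) ⬝ᵥ (A * (A + B)⁻¹ * B) *ᵥ (x - y) := by
  set C := A + B with hCdef
  set w := A *ᵥ x + B *ᵥ y with hwdef
  set m := C⁻¹ *ᵥ w with hmdef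
  have hCt : Cᵀ = C := by rw [hCdef, Matrix.transpose_add, hAt, hBt]
  have hCinvt : (C⁻¹)ᵀ = C⁻¹ := by rw [Matrix.transpose_nonsing_inv, hCt]
  have hCC : C * C⁻¹ = 1 := Matrix.mul_nonsing_inv C hCu
  have hCC' : C⁻¹ * C = 1 := Matrix.nonsing_inv_mul C hCu
  have hCm : C *ᵥ m = w := by
    rw [hmdef, Matrix.mulVec_mulVec, hCC, Matrix.one_mulVec]
  have hsumA : A * C⁻¹ * A + A * C⁻¹ * B = A := by
    rw [← mul_add, ← hCdef, mul_assoc, hCC', mul_one]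
  have hsumB : B * C⁻¹ * A + B * C⁻¹ * B = B := by
    rw [← mul_add, ← hCdef, mul_assoc, hCC', mul_one]
  have h3 : A * C⁻¹ * B = A - A * C⁻¹ * A := eq_sub_of_add_eq' hsumA
  have hBCA : B * C⁻¹ * A = A * C⁻¹ * B := by
    have h1 : (A * C⁻¹ * B)ᵀ = B * C⁻¹ * A := by
      rw [Matrix.transpose_mul, Matrix.transpose_mul, hCinvt, hAt, hBt, mul_assoc]
    have h2 : (A * C⁻¹ * A)ᵀ = A * C⁻¹ * A := by
      rw [Matrix.transpose_mul, Matrix.transpose_mul, hCinvt, hAt, mul_assoc]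
    calc B * C⁻¹ * A = (A * C⁻¹ * B)ᵀ := h1.symm
      _ = (A - A * C⁻¹ * A)ᵀ := by rw [h3]
      _ = A - A * C⁻¹ * A := by rw [Matrix.transpose_sub, hAt, h2]
      _ = A * C⁻¹ * B := h3.symm
  have hA' : A = A * C⁻¹ * A + A * C⁻¹ * B := hsumA.symm
  have hB' : B = B * C⁻¹ * B + A * C⁻¹ * B := by
    rw [← hBCA]
    rw [add_comm]
    exact hsumB.symm
  have e_r1 : x ⬝ᵥ A *ᵥ t = t ⬝ᵥ A *ᵥ x := bilin_comm hAt x t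
  have e_r2 : y ⬝ᵥ B *ᵥ t = t ⬝ᵥ B *ᵥ y := bilin_comm hBt y t
  have e_r3 : t ⬝ᵥ C *ᵥ t = t ⬝ᵥ A *ᵥ t + t ⬝ᵥ B *ᵥ t := by
    rw [hCdef, Matrix.add_mulVec, dotProduct_add]
  have e_r4 : t ⬝ᵥ C *ᵥ m = t ⬝ᵥ A *ᵥ x + t ⬝ᵥ B *ᵥ y := by
    rw [hCm, hwdef, dotProduct_add]
  have e_r5 : m ⬝ᵥ C *ᵥ t = t ⬝ᵥ A *ᵥ x + t ⬝ᵥ B *ᵥ y := by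
    rw [bilin_comm hCt m t, e_r4]
  have key : ∀ P Q : Matrix (Fin d) (Fin d) ℝ, ∀ u v : Fin d → ℝ, Pᵀ = P →
      (P *ᵥ u) ⬝ᵥ ((C⁻¹ * Q) *ᵥ v) = u ⬝ᵥ (P * C⁻¹ * Q) *ᵥ v := by
    intro P Q u v hPt
    rw [mulVec_dot, hPt, Matrix.mulVec_mulVec, ← mul_assoc]
  have e_r6 : m ⬝ᵥ C *ᵥ m
      = x ⬝ᵥ (A * C⁻¹ * A) *ᵥ x + y ⬝ᵥ (A * C⁻¹ * B) *ᵥ x + x ⬝ᵥ (A * C⁻¹ * B) *ᵥ y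
        + y ⬝ᵥ (B * C⁻¹ * B) *ᵥ y := by
    have h0 : m ⬝ᵥ C *ᵥ m = w ⬝ᵥ (C⁻¹ *ᵥ w) := by
      rw [hCm, hmdef, dotProduct_comm]
    rw [h0]
    have hsplit : C⁻¹ *ᵥ w = (C⁻¹ * A) *ᵥ x + (C⁻¹ * B) *ᵥ y := by
      rw [hwdef, Matrix.mulVec_add, Matrix.mulVec_mulVec, Matrix.mulVec_mulVec]
    rw [hsplit, hwdef]
    rw [dotProduct_add, add_dotProduct, add_dotProduct]
    rw [key A A x x hAt, key B A y x hBt, key A B x y hAt, key B B y y hBt, hBCA]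
    ring
  have sA : x ⬝ᵥ A *ᵥ x = x ⬝ᵥ (A * C⁻¹ * A) *ᵥ x + x ⬝ᵥ (A * C⁻¹ * B) *ᵥ x := by
    conv_lhs => rw [hA']
    rw [Matrix.add_mulVec, dotProduct_add]
  have sB : y ⬝ᵥ B *ᵥ y = y ⬝ᵥ (B * C⁻¹ * B) *ᵥ y + y ⬝ᵥ (A * C⁻¹ * B) *ᵥ y := by
    conv_lhs => rw [hB']
    rw [Matrix.add_mulVec, dotProduct_add]
  simp only [Matrix.mulVec_sub, sub_dotProduct, dotProduct_sub]
  rw [e_r1, e_r2, e_r3, e_r4, e_r5, e_r6, sA, sB]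
  have e_r7 : y ⬝ᵥ (A * C⁻¹ * B) *ᵥ x = x ⬝ᵥ (A * C⁻¹ * B) *ᵥ y := by
    apply bilin_comm
    rw [Matrix.transpose_mul, Matrix.transpose_mul, hCinvt, hAt, hBt, ← mul_assoc, hBCA]
  rw [e_r7]
  ring

lemma sqrt_pi_pow (d : ℕ) : Real.sqrt π ^ d = Real.sqrt (π ^ d) := by
  have h1 : ((Real.sqrt π) ^ d) ^ 2 = π ^ d := by
    rw [← pow_mul, pow_mul', Real.sq_sqrt pi_nonneg]
  rw [← h1, Real.sqrt_sq (by positivity)]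

lemma det_inv_add_inv {P Q : Matrix (Fin d) (Fin d) ℝ} (hP : P.PosDef) (hQ : Q.PosDef) :
    (P⁻¹ + Q⁻¹).det = P.det⁻¹ * (P + Q).det * Q.det⁻¹ := by
  have hPu : IsUnit P.det := hP.det_pos.ne'.isUnit
  have hQu : IsUnit Q.det := hQ.det_pos.ne'.isUnit
  have hfact : P⁻¹ * (P + Q) * Q⁻¹ = P⁻¹ + Q⁻¹ := by
    calc P⁻¹ * (P + Q) * Q⁻¹ = (P⁻¹ * P + P⁻¹ * Q) * Q⁻¹ := by rw [mul_add]
      _ = P⁻¹ * P * Q⁻¹ + P⁻¹ * (Q * Q⁻¹) := by rw [add_mul, mul_assoc, mul_assoc]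
      _ = Q⁻¹ + P⁻¹ := by
          rw [Matrix.nonsing_inv_mul P hPu, one_mul, Matrix.mul_nonsing_inv Q hQu, mul_one]
      _ = P⁻¹ + Q⁻¹ := add_comm _ _
  rw [← hfact, Matrix.det_mul, Matrix.det_mul, Matrix.det_nonsing_inv,
    Matrix.det_nonsing_inv]
  simp [Ring.inverse_eq_inv']

lemma inv_ACB {P Q : Matrix (Fin d) (Fin d) ℝ} (hP : P.PosDef) (hQ : Q.PosDef) :
    P⁻¹ * (P⁻¹ + Q⁻¹)⁻¹ * Q⁻¹ = (P + Q)⁻¹ := by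
  have hPu : IsUnit P.det := hP.det_pos.ne'.isUnit
  have hQu : IsUnit Q.det := hQ.det_pos.ne'.isUnit
  have hfact : Q * (P⁻¹ + Q⁻¹) * P = P + Q := by
    calc Q * (P⁻¹ + Q⁻¹) * P = (Q * P⁻¹ + Q * Q⁻¹) * P := by rw [mul_add]
      _ = Q * (P⁻¹ * P) + Q * Q⁻¹ * P := by rw [add_mul, mul_assoc, mul_assoc]

      _ = Q + P := by
          rw [Matrix.nonsing_inv_mul P hPu, mul_one, Matrix.mul_nonsing_inv Q hQu, one_mul]
      _ = P + Q := add_comm _ _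
  rw [← hfact, Matrix.mul_inv_rev, Matrix.mul_inv_rev, ← mul_assoc]

lemma norm_const {P Q : Matrix (Fin d) (Fin d) ℝ} (hP : P.PosDef) (hQ : Q.PosDef) :
    (Real.sqrt (π ^ d * P.det))⁻¹ * (Real.sqrt (π ^ d * Q.det))⁻¹ *
      (Real.sqrt π ^ d / Real.sqrt ((P⁻¹ + Q⁻¹).det))
    = (Real.sqrt (π ^ d * (P + Q).det))⁻¹ := by
  have hdP := hP.det_pos
  have hdQ := hQ.det_pos
  have hdS := (hP.add hQ).det_pos
  rw [det_inv_add_inv hP hQ, sqrt_pi_pow]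
  rw [Real.sqrt_mul (by positivity) P.det, Real.sqrt_mul (by positivity) Q.det,
    Real.sqrt_mul (by positivity) (P+Q).det,
    Real.sqrt_mul (by positivity) Q.det⁻¹, Real.sqrt_mul (by positivity) (P+Q).det,
    Real.sqrt_inv, Real.sqrt_inv]
  have h1 : (0:ℝ) < Real.sqrt (π ^ d) := Real.sqrt_pos.mpr (by positivity)
  have h2 : (0:ℝ) < Real.sqrt P.det := Real.sqrt_pos.mpr hdP
  have h3 : (0:ℝ) < Real.sqrt Q.det := Real.sqrt_pos.mpr hdQ
  have h4 : (0:ℝ) < Real.sqrt (P+Q).det := Real.sqrt_pos.mpr hdS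
  field_simp

/-- The Gaussian feature function. -/
noncomputable def gk (T : Matrix (Fin d) (Fin d) ℝ) (x t : Fin d → ℝ) : ℝ :=
  (Real.sqrt (π ^ d * T.det))⁻¹ * rexp (-((t - x) ⬝ᵥ T⁻¹ *ᵥ (t - x)))

lemma gk_mul {P Q : Matrix (Fin d) (Fin d) ℝ} (hP : P.PosDef) (hQ : Q.PosDef)
    (x y : Fin d → ℝ) :
    ∃ m : Fin d → ℝ, ∀ t : Fin d → ℝ,
      gk P x t * gk Q y t
        = ((Real.sqrt (π ^ d * P.det))⁻¹ * (Real.sqrt (π ^ d * Q.det))⁻¹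
            * rexp (-((x - y) ⬝ᵥ (P + Q)⁻¹ *ᵥ (x - y))))
          * rexp (-((t - m) ⬝ᵥ (P⁻¹ + Q⁻¹) *ᵥ (t - m))) := by
  have hC : (P⁻¹ + Q⁻¹).PosDef := hP.inv.add hQ.inv
  have hCu : IsUnit (P⁻¹ + Q⁻¹).det := hC.det_pos.ne'.isUnit
  have hAt : (P⁻¹)ᵀ = P⁻¹ := real_isHermitian_transpose hP.inv.1
  have hBt : (Q⁻¹)ᵀ = Q⁻¹ := real_isHermitian_transpose hQ.inv.1
  refine ⟨(P⁻¹ + Q⁻¹)⁻¹ *ᵥ (P⁻¹ *ᵥ x + Q⁻¹ *ᵥ y), fun t => ?_⟩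
  have hcs := complete_square hAt hBt hCu x y t
  rw [inv_ACB hP hQ] at hcs
  unfold gk
  rw [show ∀ a b c e : ℝ, a * b * (c * e) = (a * c) * (b * e) from fun a b c e => by ring]
  rw [← Real.exp_add, ← neg_add, hcs, neg_add, Real.exp_add]
  ring

lemma gk_mul_integrable {P Q : Matrix (Fin d) (Fin d) ℝ} (hP : P.PosDef) (hQ : Q.PosDef)
    (x y : Fin d → ℝ) :
    Integrable (fun t => gk P x t * gk Q y t) (volume : Measure (Fin d → ℝ)) := by
  have hC : (P⁻¹ + Q⁻¹).PosDef := hP.inv.add hQ.inv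
  obtain ⟨m, hm⟩ := gk_mul hP hQ x y
  simp_rw [hm]
  exact ((integrable_exp_neg_quad hC).comp_sub_right m).const_mul _

lemma gk_mul_integral {P Q : Matrix (Fin d) (Fin d) ℝ} (hP : P.PosDef) (hQ : Q.PosDef)
    (x y : Fin d → ℝ) :
    ∫ t : Fin d → ℝ, gk P x t * gk Q y t
      = (Real.sqrt (π ^ d * (P + Q).det))⁻¹ * rexp (-((x - y) ⬝ᵥ (P + Q)⁻¹ *ᵥ (x - y))) := by
  have hC : (P⁻¹ + Q⁻¹).PosDef := hP.inv.add hQ.inv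
  obtain ⟨m, hm⟩ := gk_mul hP hQ x y
  simp_rw [hm]
  rw [MeasureTheory.integral_const_mul]
  have hshift : ∫ t : Fin d → ℝ, rexp (-((t - m) ⬝ᵥ (P⁻¹ + Q⁻¹) *ᵥ (t - m)))
      = Real.sqrt π ^ d / Real.sqrt ((P⁻¹ + Q⁻¹).det) := by
    have h := MeasureTheory.integral_sub_right_eq_self
      (μ := (volume : Measure (Fin d → ℝ)))
      (fun t : Fin d → ℝ => rexp (-(t ⬝ᵥ (P⁻¹ + Q⁻¹) *ᵥ t))) m
    exact h.trans (integral_exp_neg_quad hC)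
  rw [hshift, ← norm_const hP hQ]
  ring

end StmtNineAux

open StmtNineAux MeasureTheory in
/-- For `γ > 0` and any assignment `x ↦ Σ_x` of positive definite
self-adjoint matrices, `K̂_γ` is a positive semidefinite (Mercer) kernel:
all finite quadratic forms `∑ᵢ∑ⱼ cᵢcⱼ K̂_γ(xᵢ,xⱼ)` are nonnegative, and
`K̂_γ` is symmetric. -/
theorem stmt_9 (d : ℕ) (γ : ℝ) (hγ : 0 < γ)
    (S : (Fin d → ℝ) → Matrix (Fin d) (Fin d) ℝ)
    (hS : ∀ x, (S x).PosDef) :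
    (∀ (n : ℕ) (x : Fin n → Fin d → ℝ) (c : Fin n → ℝ),
        0 ≤ ∑ i, ∑ j, c i * c j * hatK γ S (x i) (x j)) ∧
      ∀ x y : Fin d → ℝ, hatK γ S x y = hatK γ S y x := by
  -- positive definite rescaled matrices
  have hT : ∀ x, ((γ⁻¹ • S x : Matrix (Fin d) (Fin d) ℝ)).PosDef :=
    fun x => posDef_smul_aux (hS x) (by positivity)
  -- `hatK` is the integral of products of Gaussian features
  have hatK_eq : ∀ x y : Fin d → ℝ,
      hatK γ S x y = (Real.sqrt (π ^ d * ((γ⁻¹ • S x) + (γ⁻¹ • S y)).det))⁻¹ *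
        rexp (-((x - y) ⬝ᵥ ((γ⁻¹ • S x) + (γ⁻¹ • S y))⁻¹ *ᵥ (x - y))) := by
    intro x y
    have hM : (S x + S y).PosDef := (hS x).add (hS y)
    have hMu : IsUnit (S x + S y).det := hM.det_pos.ne'.isUnit
    have hTsum : (γ⁻¹ • S x) + (γ⁻¹ • S y) = γ⁻¹ • (S x + S y) := (smul_add γ⁻¹ _ _).symm
    have hdet : ((γ⁻¹ • (S x + S y) : Matrix (Fin d) (Fin d) ℝ)).det
        = (γ⁻¹) ^ d * (S x + S y).det := by
      rw [Matrix.det_smul]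
      simp
    have hinv : ((γ⁻¹ • (S x + S y) : Matrix (Fin d) (Fin d) ℝ))⁻¹
        = γ • (S x + S y)⁻¹ := by
      apply Matrix.inv_eq_right_inv
      rw [smul_mul_assoc, mul_smul_comm, smul_smul, inv_mul_cancel₀ hγ.ne', one_smul,
        Matrix.mul_nonsing_inv _ hMu]
    have hbase : π ^ d * ((γ⁻¹) ^ d * (S x + S y).det) = (π / γ) ^ d * (S x + S y).det := by
      rw [div_pow, div_eq_mul_inv, ← inv_pow]
      ring
    have hexp : (x - y) ⬝ᵥ (γ • (S x + S y)⁻¹) *ᵥ (x - y)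
        = γ * ((x - y) ⬝ᵥ (S x + S y)⁻¹ *ᵥ (x - y)) := by
      rw [Matrix.smul_mulVec, dotProduct_smul, smul_eq_mul]
    have hpos : (0:ℝ) < (π / γ) ^ d * (S x + S y).det := by
      have := hM.det_pos
      positivity
    rw [hatK, hTsum, hdet, hinv, hexp, hbase, mahSq, neg_mul]
    rw [Real.rpow_neg hpos.le, Real.sqrt_eq_rpow]
  constructor
  · intro n x c
    set F : Fin n → (Fin d → ℝ) → ℝ := fun i t => gk (γ⁻¹ • S (x i)) (x i) t with hF
    have hint : ∀ i j, Integrable (fun t => F i t * F j t) (volume : Measure (Fin d → ℝ)) :=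
      fun i j => gk_mul_integrable (hT (x i)) (hT (x j)) (x i) (x j)
    have hiden : ∀ i j, hatK γ S (x i) (x j) = ∫ t : Fin d → ℝ, F i t * F j t := by
      intro i j
      rw [hatK_eq, ← gk_mul_integral (hT (x i)) (hT (x j)) (x i) (x j)]
    calc ∑ i, ∑ j, c i * c j * hatK γ S (x i) (x j)
        = ∑ i, ∑ j, ∫ t : Fin d → ℝ, (c i * F i t) * (c j * F j t) := by
          apply Finset.sum_congr rfl; intro i _
          apply Finset.sum_congr rfl; intro j _
          rw [hiden i j, ← MeasureTheory.integral_const_mul]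
          congr 1 with t
          ring
      _ = ∫ t : Fin d → ℝ, ∑ i, ∑ j, (c i * F i t) * (c j * F j t) := by
          rw [MeasureTheory.integral_finset_sum]
          · apply Finset.sum_congr rfl; intro i _
            rw [MeasureTheory.integral_finset_sum]
            intro j _
            have := (hint i j).const_mul (c i * c j)
            convert this using 2 with t
            ring
          · intro i _
            apply MeasureTheory.integrable_finset_sum
            intro j _
            have := (hint i j).const_mul (c i * c j)
            convert this using 2 with t
            · rfl
            · ring
      _ = ∫ t : Fin d → ℝ, (∑ i, c i * F i t) ^ 2 := by
          congr 1 with t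
          rw [sq, Finset.sum_mul_sum]
      _ ≥ 0 := MeasureTheory.integral_nonneg fun t => sq_nonneg _
  · intro x y
    unfold hatK mahSq
    rw [add_comm (S y) (S x)]
    congr 2
    rw [show y - x = -(x - y) from (neg_sub x y).symm, Matrix.mulVec_neg,
      dotProduct_neg, neg_dotProduct, neg_neg]
end
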